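/- Support property for weak modes: let (X, d, μ) be a separable metric probability space and let u ∈ X be a weak mode, i.e. for every v ≠ u, liminf_{r→0} μ(B(u,r))/μ(B(v,r)) ≥ 1 (with conventions c/0 = ∞ for c > 0 and 0/0 = 1). Then u ∈ supp(μ). -/

import Mathlib

open MeasureTheory Metric Filter Topology

/-- Ball-mass ratio with the conventions `c/0 = ∞` for `c > 0` and `0/0 = 1`. -/
noncomputable def mRatio (a b : ENNReal) : ENNReal :=
  if b = 0 then (if a = 0 then 1 else ⊤) else a / b

theorem stmt11 {X : Type*} [MetricSpace X] [TopologicalSpace.SeparableSpace X]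
    [MeasurableSpace X] [BorelSpace X] (μ : Measure X) [IsProbabilityMeasure μ]
    (u : X)
    (hu : ∀ v : X, v ≠ u →
        1 ≤ Filter.liminf
          (fun r : ℝ => mRatio (μ (ball u r)) (μ (ball v r))) (𝓝[>] (0:ℝ))) :
    ∀ r : ℝ, 0 < r → 0 < μ (ball u r) := by
  have : SecondCountableTopology X := UniformSpace.secondCountable_of_separable X
  by_contra h
  push_neg at h
  obtain ⟨r, hr, hr0⟩ := h
  have hball : μ (ball u r) = 0 := le_antisymm hr0 zero_le
  -- there exists a point all of whose balls have positive measure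
  have hv : ∃ v : X, ∀ s : ℝ, 0 < s → 0 < μ (ball v s) := by
    by_contra hv
    push_neg at hv
    have : μ Set.univ = 0 := by
      apply measure_null_of_locally_null
      intro x _
      obtain ⟨s, hs, hs0⟩ := hv x
      exact ⟨ball x s, nhdsWithin_le_nhds (ball_mem_nhds x hs), le_antisymm hs0 zero_le⟩
    simp [measure_univ] at this
  obtain ⟨v, hvpos⟩ := hv
  have hvu : v ≠ u := by
    rintro rfl
    exact absurd hball (hvpos r hr).ne'
  have h1 := hu v hvu
  have hev : ∀ᶠ s in 𝓝[>] (0:ℝ),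
      mRatio (μ (ball u s)) (μ (ball v s)) = 0 := by
    filter_upwards [Ioo_mem_nhdsGT_of_mem (Set.left_mem_Ico.2 hr)] with s hs
    have hus : μ (ball u s) = 0 :=
      le_antisymm (le_trans (measure_mono (ball_subset_ball hs.2.le)) hball.le) zero_le
    have hvs : μ (ball v s) ≠ 0 := (hvpos s hs.1).ne'
    simp [mRatio, hus, hvs]
  have : Filter.liminf (fun s : ℝ => mRatio (μ (ball u s)) (μ (ball v s))) (𝓝[>] (0:ℝ)) = 0 := by
    rw [liminf_congr hev]
    simp
  rw [this] at h1
  exact absurd h1 (by simp)
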